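/- arXiv:1112.4024 — 3 statements merged into one kernel-verified Lean document; each statement's English description precedes it below -/
import Mathlib

section
/- (Maharam recurrence) Let (X, μ) be a σ-finite measure space with a measurable measure-preserving flow (u_t)_{t∈ℝ}. If there exists a measurable set B ⊂ X with 0 < μ(B) < ∞ such that for μ-almost every x ∈ X one has ∫₀^∞ χ_B(x u_t) dt = ∞, then the flow is conservative: for every measurable set S with μ(S) > 0, for μ-almost every x ∈ S the set {t > 0 : x u_t ∈ S} is unbounded. -/
open MeasureTheory ENNReal

/-- Maharam's recurrence theorem: if a measurable measure-preserving flow `φ` on a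
σ-finite measure space admits a set `B` of finite positive measure such that almost
every orbit spends infinite time in `B`, then the flow is conservative: for every set
`S` of positive measure, a.e. point of `S` returns to `S` for an unbounded set of
positive times. -/
theorem stmt6 {X : Type*} [MeasurableSpace X] (μ : Measure X) [SigmaFinite μ]
    (φ : ℝ → X → X)
    (hmeas : Measurable fun p : ℝ × X => φ p.1 p.2)
    (hid : ∀ x, φ 0 x = x)
    (hflow : ∀ s t x, φ (s + t) x = φ s (φ t x))
    (hpres : ∀ t, MeasurePreserving (φ t) μ μ)
    (B : Set X) (hB : MeasurableSet B) (hB0 : 0 < μ B) (hBfin : μ B < ⊤)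
    (hinf : ∀ᵐ x ∂μ, (∫⁻ t in Set.Ioi (0 : ℝ),
      Set.indicator B (fun _ => (1 : ℝ≥0∞)) (φ t x)) = ⊤) :
    ∀ S : Set X, MeasurableSet S → 0 < μ S →
      ∀ᵐ x ∂μ, x ∈ S → ∀ T : ℝ, ∃ t : ℝ, T < t ∧ 0 < t ∧ φ t x ∈ S := by
  -- notation
  set F : ℝ → X → ℝ≥0∞ := fun t x => Set.indicator B (fun _ => (1 : ℝ≥0∞)) (φ t x) with hF
  have hFmeas : Measurable fun p : ℝ × X => F p.1 p.2 :=
    (Measurable.indicator measurable_const hB).comp hmeas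
  have hFmeas1 : ∀ x, Measurable fun t => F t x := fun x =>
    hFmeas.comp (measurable_id.prodMk measurable_const)
  -- occupation in one unit of time
  set g : X → ℝ≥0∞ := fun x => ∫⁻ t in Set.Ioc (0:ℝ) 1, F t x with hg
  have hgmeas : Measurable g := by
    apply Measurable.lintegral_prod_right (f := fun x t => F t x)
    exact hFmeas.comp (measurable_swap)
  -- iterates of the time-one map
  have hiter : ∀ (n : ℕ) (x : X), (φ 1)^[n] x = φ (n : ℝ) x := by
    intro n
    induction n with
    | zero => intro x; simpa using (hid x).symm
    | succ n ih =>
      intro x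
      rw [Function.iterate_succ', Function.comp_apply, ih x, ← hflow, add_comm]
      norm_num
  -- cancel: φ (-n) (φ n x) = x
  have hcancel : ∀ (r : ℝ) (x : X), φ (-r) (φ r x) = x := by
    intro r x
    rw [← hflow]
    simpa using hid x
  -- translation of g along the flow
  have hshift : ∀ (n : ℕ) (x : X), g (φ (n:ℝ) x) = ∫⁻ t in Set.Ioc (n:ℝ) (n+1), F t x := by
    intro n x
    have hmap : (volume : Measure ℝ) = Measure.map (· + (n:ℝ)) volume :=
      (map_add_right_eq_self volume _).symm
    have : (∫⁻ t in Set.Ioc (n:ℝ) (n+1), F t x)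
        = ∫⁻ t in (· + (n:ℝ)) ⁻¹' Set.Ioc (n:ℝ) (n+1), F (t + n) x := by
      conv_lhs => rw [hmap]
      exact setLIntegral_map measurableSet_Ioc (hFmeas1 x) (measurable_add_const _)
    have hpre : (· + (n:ℝ)) ⁻¹' Set.Ioc (n:ℝ) (n+1) = Set.Ioc (0:ℝ) 1 := by
      ext t
      simp only [Set.mem_preimage, Set.mem_Ioc]
      constructor <;> rintro ⟨h1, h2⟩ <;> constructor <;> linarith
    rw [this, hpre, hg]
    apply lintegral_congr
    intro t
    simp only [hF]
    rw [hflow]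
  -- decomposition of Ioi 0
  have hIoi : Set.Ioi (0:ℝ) = ⋃ n : ℕ, Set.Ioc (n:ℝ) (n+1) := by
    ext t
    simp only [Set.mem_Ioi, Set.mem_iUnion, Set.mem_Ioc]
    constructor
    · intro ht
      refine ⟨⌈t⌉₊ - 1, ?_, ?_⟩
      · have h1 : 1 ≤ ⌈t⌉₊ := Nat.one_le_ceil_iff.2 ht
        have := Nat.ceil_lt_add_one ht.le
        push_cast [h1]
        linarith
      · have h1 : 1 ≤ ⌈t⌉₊ := Nat.one_le_ceil_iff.2 ht
        have := Nat.le_ceil t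
        push_cast [h1]
        linarith
    · rintro ⟨n, hn, -⟩
      exact lt_of_le_of_lt (Nat.cast_nonneg n) hn
  have hdisjkey : ∀ i j : ℕ, i < j → Disjoint (Set.Ioc (i:ℝ) (i+1)) (Set.Ioc (j:ℝ) (j+1)) := by
    intro i j h
    rw [Set.Ioc_disjoint_Ioc]
    have hij : (i:ℝ) + 1 ≤ (j:ℝ) := by exact_mod_cast Nat.succ_le_of_lt h
    calc ((i:ℝ)+1) ⊓ ((j:ℝ)+1) ≤ (i:ℝ)+1 := inf_le_left
      _ ≤ (j:ℝ) := hij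
      _ ≤ (i:ℝ) ⊔ (j:ℝ) := le_sup_right
  have hdisj : Pairwise (Function.onFun Disjoint fun n : ℕ => Set.Ioc (n:ℝ) (n+1)) := by
    intro i j hij
    rcases hij.lt_or_gt with h | h
    · exact hdisjkey i j h
    · exact (hdisjkey j i h).symm
  -- the sum of g along the orbit equals the total occupation time
  have hsum : ∀ x, (∑' n : ℕ, g (φ (n:ℝ) x)) = ∫⁻ t in Set.Ioi (0:ℝ), F t x := by
    intro x
    rw [hIoi, lintegral_iUnion (fun n => measurableSet_Ioc) hdisj]
    exact tsum_congr fun n => hshift n x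
  -- total mass of g
  have hgle : ∫⁻ x, g x ∂μ = μ B := by
    rw [hg]
    have hswap : (∫⁻ x, ∫⁻ t in Set.Ioc (0:ℝ) 1, F t x ∂volume ∂μ)
        = ∫⁻ t in Set.Ioc (0:ℝ) 1, ∫⁻ x, F t x ∂μ ∂volume := by
      apply lintegral_lintegral_swap
      exact (hFmeas.comp measurable_swap).aemeasurable
    rw [hswap]
    have hinner : ∀ t : ℝ, (∫⁻ x, F t x ∂μ) = μ B := by
      intro t
      have : (fun x => F t x) = Set.indicator ((φ t) ⁻¹' B) (fun _ => (1:ℝ≥0∞)) := by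
        ext x
        simp only [hF, Set.indicator]
        by_cases hx : φ t x ∈ B <;> simp [hx, Set.mem_preimage]
      rw [this, lintegral_indicator (hB.preimage (hpres t).measurable),
        setLIntegral_const, one_mul]
      exact (hpres t).measure_preimage hB.nullMeasurableSet
    simp only [hinner]
    rw [setLIntegral_const]
    simp
  -- conservativity of the time-one map
  have hcons : MeasureTheory.Conservative (φ 1) μ := by
    refine ⟨(hpres 1).quasiMeasurePreserving, ?_⟩
    intro s hs hs0
    by_contra hno
    push_neg at hno
    -- s is wandering for φ 1
    set C : ℕ → Set X := fun n => (φ (-(n:ℝ))) ⁻¹' s with hC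
    have hCmeas : ∀ n, MeasurableSet (C n) := fun n => hs.preimage (hpres _).measurable
    have hCkey : ∀ i j : ℕ, i < j → Disjoint (C i) (C j) := by
      intro i j h
      rw [Set.disjoint_left]
      intro x hxi hxj
      have hyi : φ (-(i:ℝ)) x ∈ s := hxi
      have hyj : φ (-(j:ℝ)) x ∈ s := hxj
      have hstep : (φ 1)^[j - i] (φ (-(j:ℝ)) x) = φ (-(i:ℝ)) x := by
        rw [hiter, ← hflow]
        congr 1
        have : (i:ℝ) ≤ (j:ℝ) := by exact_mod_cast h.le
        push_cast [Nat.cast_sub h.le]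
        ring
      have hne : j - i ≠ 0 := Nat.sub_ne_zero_of_lt h
      exact hno _ hyj _ hne (hstep ▸ hyi)
    have hCdisj : Pairwise (Function.onFun Disjoint C) := by
      intro i j hij
      rcases hij.lt_or_gt with h | h
      · exact hCkey i j h
      · exact (hCkey j i h).symm
    -- pushforward identity
    have hpush : ∀ n : ℕ, (∫⁻ x in s, g (φ (n:ℝ) x) ∂μ) = ∫⁻ x in C n, g x ∂μ := by
      intro n
      rw [← lintegral_indicator hs, ← lintegral_indicator (hCmeas n)]
      have hptw : ∀ x, s.indicator (fun x => g (φ (n:ℝ) x)) x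
          = ((C n).indicator g) (φ (n:ℝ) x) := by
        intro x
        have hmem : φ (n:ℝ) x ∈ C n ↔ x ∈ s := by
          simp only [hC, Set.mem_preimage]
          rw [hcancel]
        by_cases hx : x ∈ s
        · rw [Set.indicator_of_mem hx, Set.indicator_of_mem (hmem.2 hx)]
        · rw [Set.indicator_of_notMem hx, Set.indicator_of_notMem (fun h => hx (hmem.1 h))]
      simp only [hptw]
      exact (hpres _).lintegral_comp (hgmeas.indicator (hCmeas n))
    -- the sum over s is finite…
    have hfin : (∑' n : ℕ, ∫⁻ x in s, g (φ (n:ℝ) x) ∂μ) ≤ μ B := by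
      calc (∑' n : ℕ, ∫⁻ x in s, g (φ (n:ℝ) x) ∂μ)
          = ∑' n : ℕ, ∫⁻ x in C n, g x ∂μ := tsum_congr hpush
        _ = ∫⁻ x in ⋃ n, C n, g x ∂μ := (lintegral_iUnion hCmeas hCdisj g).symm
        _ ≤ ∫⁻ x, g x ∂μ := setLIntegral_le_lintegral _ _
        _ = μ B := hgle
    -- …but also infinite
    have hainf : ∀ᵐ x ∂μ.restrict s, (∑' n : ℕ, g (φ (n:ℝ) x)) = ⊤ := by
      apply ae_restrict_of_ae
      filter_upwards [hinf] with x hx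
      rw [hsum]; exact hx
    have htop : (∫⁻ x in s, ∑' n : ℕ, g (φ (n:ℝ) x) ∂μ) = ⊤ := by
      rw [lintegral_congr_ae hainf, setLIntegral_const]
      exact ENNReal.top_mul hs0
    have hswap2 : (∫⁻ x in s, ∑' n : ℕ, g (φ (n:ℝ) x) ∂μ)
        = ∑' n : ℕ, ∫⁻ x in s, g (φ (n:ℝ) x) ∂μ := by
      apply lintegral_tsum
      intro n
      exact (hgmeas.comp ((hpres _).measurable)).aemeasurable
    rw [hswap2] at htop
    rw [htop] at hfin
    exact absurd (lt_of_le_of_lt hfin hBfin) (lt_irrefl _)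
  -- conclusion
  intro S hS hS0
  filter_upwards [hcons.ae_mem_imp_frequently_image_mem hS.nullMeasurableSet] with x hx hxS T
  have hfreq := Filter.frequently_atTop.1 (hx hxS)
  obtain ⟨n, hn, hnS⟩ := hfreq (⌈T⌉₊ + 1)
  refine ⟨(n:ℝ), ?_, ?_, ?_⟩
  · have h1 : T ≤ (⌈T⌉₊ : ℝ) := Nat.le_ceil T
    have h2 : (⌈T⌉₊ : ℝ) < n := by exact_mod_cast Nat.lt_of_succ_le hn
    linarith
  · have : 1 ≤ n := le_trans (Nat.succ_le_succ (Nat.zero_le _)) hn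
    exact_mod_cast Nat.lt_of_lt_of_le Nat.zero_lt_one this
  · rw [← hiter]; exact hnS
end

section
/- Let λ be Lebesgue measure on a bounded interval I, let f_i, f, g_i, g ∈ L²(I, λ) be nonnegative with f_i → f and g_i → g in L²(I), let O ⊂ I be Borel, and let (L_i) be Borel subsets of I such that ∫_{O \ L_i} f_i dλ → 0. Then limsup_i ∫_{O \ L_i} g_i dλ ≤ ∫_{O ∩ {f = 0}} g dλ. -/
open MeasureTheory Filter

lemma aux_l2_to_l1 {μ : Measure ℝ} [IsFiniteMeasure μ] {hseq : ℕ → ℝ → ℝ} {h : ℝ → ℝ}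
    (hmem : ∀ i, MemLp (hseq i) 2 μ) (hmem' : MemLp h 2 μ)
    (hconv : Tendsto (fun i => eLpNorm (fun x => hseq i x - h x) 2 μ) atTop (nhds 0)) :
    Tendsto (fun i => eLpNorm (fun x => hseq i x - h x) 1 μ) atTop (nhds 0) := by
  have hmeas : ∀ i, AEStronglyMeasurable (fun x => hseq i x - h x) μ :=
    fun i => (hmem i).aestronglyMeasurable.sub hmem'.aestronglyMeasurable
  have hbd : ∀ i, eLpNorm (fun x => hseq i x - h x) 1 μ ≤
      eLpNorm (fun x => hseq i x - h x) 2 μ * μ Set.univ ^ ((1 : ℝ)/1 - 1/2) := by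
    intro i
    simpa using eLpNorm_le_eLpNorm_mul_rpow_measure_univ (p := 1) (q := 2)
      (by norm_num) (hmeas i)
  have hc : (μ Set.univ) ^ ((1 : ℝ)/1 - 1/2) ≠ ⊤ := by
    refine ENNReal.rpow_ne_top_of_nonneg (by norm_num) (measure_ne_top μ _)
  have hmul : Tendsto (fun i => eLpNorm (fun x => hseq i x - h x) 2 μ *
      μ Set.univ ^ ((1 : ℝ)/1 - 1/2)) atTop (nhds 0) := by
    have := ENNReal.Tendsto.mul_const hconv (Or.inr hc)
    simpa using this
  exact tendsto_of_tendsto_of_tendsto_of_le_of_le tendsto_const_nhds hmul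
    (fun i => zero_le) hbd

lemma aux_diff_tendsto {μ : Measure ℝ} [IsFiniteMeasure μ] {hseq : ℕ → ℝ → ℝ} {h : ℝ → ℝ}
    (hmem : ∀ i, MemLp (hseq i) 2 μ) (hmem' : MemLp h 2 μ)
    (hconv : Tendsto (fun i => eLpNorm (fun x => hseq i x - h x) 2 μ) atTop (nhds 0))
    (A : ℕ → Set ℝ) :
    Tendsto (fun i => ∫ x in A i, hseq i x ∂μ - ∫ x in A i, h x ∂μ) atTop (nhds 0) := by
  have hL1 := aux_l2_to_l1 hmem hmem' hconv
  have hint : ∀ i, Integrable (hseq i) μ := fun i => (hmem i).integrable one_le_two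
  have hinth : Integrable h μ := hmem'.integrable one_le_two
  have key : ∀ i, ‖∫ x in A i, hseq i x ∂μ - ∫ x in A i, h x ∂μ‖ ≤
      (eLpNorm (fun x => hseq i x - h x) 1 μ).toReal := by
    intro i
    rw [← integral_sub ((hint i).integrableOn) hinth.integrableOn]
    calc ‖∫ x in A i, (hseq i x - h x) ∂μ‖
        ≤ ∫ x in A i, ‖hseq i x - h x‖ ∂μ := norm_integral_le_integral_norm _
      _ ≤ ∫ x, ‖hseq i x - h x‖ ∂μ := by
          refine integral_mono_measure Measure.restrict_le_self ?_ ?_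
          · exact Filter.Eventually.of_forall (fun x => norm_nonneg _)
          · exact (((hmem i).integrable one_le_two).sub hinth).norm
      _ = (eLpNorm (fun x => hseq i x - h x) 1 μ).toReal := by
          rw [integral_norm_eq_lintegral_enorm (f := fun x => hseq i x - h x)
            ((hmem i).aestronglyMeasurable.sub hmem'.aestronglyMeasurable),
            eLpNorm_one_eq_lintegral_enorm]
  have htr : Tendsto (fun i => (eLpNorm (fun x => hseq i x - h x) 1 μ).toReal)
      atTop (nhds 0) := by
    have := (ENNReal.tendsto_toReal (by norm_num : (0:ENNReal) ≠ ⊤)).comp hL1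
    simpa [Function.comp_def] using this
  exact squeeze_zero_norm key htr


/-- Key lemma on projections (abstract form): if nonnegative `f_i → f` and `g_i → g`
in `L²` of a bounded interval `I`, and the `f_i`-mass of `O \ L_i` tends to `0`, then
the limsup of the `g_i`-mass of `O \ L_i` is bounded by the `g`-mass of the vanishing
locus `O ∩ {f = 0}`. -/
theorem stmt9 (a b : ℝ) (hab : a < b)
    (fseq gseq : ℕ → ℝ → ℝ) (f g : ℝ → ℝ)
    (hfseq : ∀ i, MemLp (fseq i) 2 (volume.restrict (Set.Icc a b)))
    (hgseq : ∀ i, MemLp (gseq i) 2 (volume.restrict (Set.Icc a b)))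
    (hf : MemLp f 2 (volume.restrict (Set.Icc a b)))
    (hg : MemLp g 2 (volume.restrict (Set.Icc a b)))
    (hfnn : ∀ i x, 0 ≤ fseq i x) (hgnn : ∀ i x, 0 ≤ gseq i x)
    (hfnn' : ∀ x, 0 ≤ f x) (hgnn' : ∀ x, 0 ≤ g x)
    (hfconv : Tendsto
      (fun i => eLpNorm (fun x => fseq i x - f x) 2 (volume.restrict (Set.Icc a b)))
      atTop (nhds 0))
    (hgconv : Tendsto
      (fun i => eLpNorm (fun x => gseq i x - g x) 2 (volume.restrict (Set.Icc a b)))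
      atTop (nhds 0))
    (O : Set ℝ) (hO : MeasurableSet O) (hOI : O ⊆ Set.Icc a b)
    (L : ℕ → Set ℝ) (hL : ∀ i, MeasurableSet (L i)) (hLI : ∀ i, L i ⊆ Set.Icc a b)
    (hmass : Tendsto (fun i => ∫ x in O \ L i, fseq i x) atTop (nhds 0)) :
    atTop.limsup (fun i => ∫ x in O \ L i, gseq i x) ≤
      ∫ x in O ∩ {x | f x = 0}, g x := by
  set μ := volume.restrict (Set.Icc a b) with hμdef
  haveI : IsFiniteMeasure μ := by
    constructor
    rw [hμdef, Measure.restrict_apply_univ, Real.volume_Icc]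
    exact ENNReal.ofReal_lt_top
  set A : ℕ → Set ℝ := fun i => O \ L i with hAdef
  have hAm : ∀ i, MeasurableSet (A i) := fun i => hO.diff (hL i)
  have hAO : ∀ i, A i ⊆ O := fun i => Set.diff_subset
  have hAI : ∀ i, A i ⊆ Set.Icc a b := fun i => (hAO i).trans hOI
  have hres : ∀ s : Set ℝ, s ⊆ Set.Icc a b → μ.restrict s = volume.restrict s := by
    intro s hs
    rw [hμdef, Measure.restrict_restrict' measurableSet_Icc, Set.inter_eq_left.mpr hs]
  have hvol : ∀ (h : ℝ → ℝ) (s : Set ℝ), s ⊆ Set.Icc a b →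
      (∫ x in s, h x) = ∫ x in s, h x ∂μ := by
    intro h s hs
    rw [hres s hs]
  have hgInt : Integrable g μ := hg.integrable one_le_two
  have hfInt : Integrable f μ := hf.integrable one_le_two
  have hgnnres : ∀ s : Set ℝ, 0 ≤ᵐ[μ.restrict s] g :=
    fun s => Filter.Eventually.of_forall hgnn'
  obtain ⟨f', hf'sm, hfae⟩ := hf.aestronglyMeasurable
  have hf'meas : Measurable f' := hf'sm.measurable
  have hf'nn : 0 ≤ᵐ[μ] f' := by
    filter_upwards [hfae] with x hx
    rw [← hx]; exact hfnn' x
  have hf'Int : Integrable f' μ := hfInt.congr hfae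
  set Z : Set ℝ := f' ⁻¹' (Set.Iic 0) with hZdef
  have hZm : MeasurableSet Z := hf'meas measurableSet_Iic
  have hsetae : (O ∩ {x | f x = 0} : Set ℝ) =ᵐ[μ] (O ∩ Z : Set ℝ) := by
    filter_upwards [hfae] with x hx
    simp only [Set.mem_inter_iff, Set.mem_setOf_eq, hZdef, Set.mem_preimage, Set.mem_Iic,
      eq_iff_iff]
    constructor
    · rintro ⟨hxO, hfx⟩
      have hfx' : f x = 0 := hfx
      have : f' x = 0 := by rw [← hx]; exact hfx'
      exact ⟨hxO, show f' x ≤ 0 from this.le⟩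
    · rintro ⟨hxO, hfx⟩
      have hfx' : f' x ≤ 0 := hfx
      refine ⟨hxO, show f x = 0 from ?_⟩
      exact le_antisymm (by rw [hx]; exact hfx') (hfnn' x)
  have hRHS : (∫ x in O ∩ {x | f x = 0}, g x) = ∫ x in O ∩ Z, g x ∂μ := by
    rw [hvol g _ ((Set.inter_subset_left).trans hOI)]
    exact setIntegral_congr_set hsetae
  have hdg : Tendsto (fun i => (∫ x in A i, gseq i x ∂μ) - ∫ x in A i, g x ∂μ)
      atTop (nhds 0) := aux_diff_tendsto hgseq hg hgconv A
  have hdf : Tendsto (fun i => (∫ x in A i, fseq i x ∂μ) - ∫ x in A i, f x ∂μ)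
      atTop (nhds 0) := aux_diff_tendsto hfseq hf hfconv A
  have hmassμ : Tendsto (fun i => ∫ x in A i, fseq i x ∂μ) atTop (nhds 0) := by
    have he : (fun i => ∫ x in A i, fseq i x ∂μ) = fun i => ∫ x in O \ L i, fseq i x := by
      funext i; exact (hvol (fseq i) (A i) (hAI i)).symm
    rw [he]; exact hmass
  have hfA : Tendsto (fun i => ∫ x in A i, f x ∂μ) atTop (nhds 0) := by
    have := hmassμ.sub hdf
    simpa [sub_sub_cancel] using this
  rw [hRHS]
  set c := ∫ x in O ∩ Z, g x ∂μ with hc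
  have key : ∀ ε : ℝ, 0 < ε → ∀ᶠ i in atTop, (∫ x in O \ L i, gseq i x) ≤ c + ε := by
    intro ε hε
    -- choose the small threshold ε'
    obtain ⟨N, hN⟩ : ∃ N : ℕ, (∫ x in O ∩ Zᶜ ∩ {x | f' x < 1/(N+1)}, g x ∂μ) < ε/4 := by
      set T : ℕ → Set ℝ := fun n => O ∩ Zᶜ ∩ {x | f' x < 1/(n+1)} with hT
      have hTm : ∀ n, MeasurableSet (T n) := fun n =>
        (hO.inter hZm.compl).inter (hf'meas measurableSet_Iio)
      have hTanti : Antitone T := by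
        intro m n hmn x hx
        refine ⟨hx.1, show f' x < 1/(m+1) from lt_of_lt_of_le hx.2 ?_⟩
        apply one_div_le_one_div_of_le
        · positivity
        · exact_mod_cast by exact_mod_cast Nat.add_le_add_right hmn 1
      have hTint : ⋂ n, T n = (∅ : Set ℝ) := by
        ext x
        simp only [Set.mem_iInter, Set.mem_empty_iff_false, iff_false]
        intro hx
        have hxZc : x ∈ Zᶜ := (hx 0).1.2
        have hle : f' x ≤ 0 := by
          by_contra hcon
          push_neg at hcon
          obtain ⟨n, hn⟩ := exists_nat_one_div_lt hcon
          exact absurd (hx n).2 (not_lt.mpr hn.le)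
        exact hxZc hle
      have htd := tendsto_setIntegral_of_antitone hTm hTanti ⟨0, hgInt.integrableOn⟩
      rw [hTint] at htd
      simp only [Measure.restrict_empty, integral_zero_measure] at htd
      exact (htd.eventually_lt_const (by positivity)).exists
    set ε' : ℝ := 1/(N+1) with hε'
    have hε'pos : 0 < ε' := by positivity
    -- absolute continuity of the g-integral
    obtain ⟨δ, hδpos, hδ⟩ := exists_pos_setLIntegral_lt_of_measure_lt (μ := μ)
      (f := fun x => (‖g x‖₊ : ENNReal)) hgInt.2.ne
      (by positivity : ENNReal.ofReal (ε/4) ≠ 0)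
    have habs : ∀ S : Set ℝ, μ S < δ → (∫ x in S, g x ∂μ) < ε/4 := by
      intro S hS
      have h1 := hδ S hS
      have h2 : (‖∫ x in S, g x ∂μ‖₊ : ENNReal) ≤ ∫⁻ x in S, (‖g x‖₊ : ENNReal) ∂μ :=
        enorm_integral_le_lintegral_enorm _
      have h4 : ENNReal.ofReal ‖∫ x in S, g x ∂μ‖ < ENNReal.ofReal (ε/4) := by
        rw [ofReal_norm]
        exact lt_of_le_of_lt h2 h1
      have h5 : ‖∫ x in S, g x ∂μ‖ < ε/4 :=
        (ENNReal.ofReal_lt_ofReal_iff (by positivity)).mp h4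
      exact lt_of_le_of_lt (le_abs_self _) (by rwa [Real.norm_eq_abs] at h5)
    set δ' : ENNReal := min δ 1 with hδ'
    have hδ'pos : δ' ≠ 0 := (lt_min hδpos zero_lt_one).ne'
    have hδ'top : δ' ≠ ⊤ := ((min_le_right _ _).trans_lt ENNReal.one_lt_top).ne
    set d : ℝ := δ'.toReal with hd
    have hdpos : 0 < d := ENNReal.toReal_pos hδ'pos hδ'top
    have E1 : ∀ᶠ i in atTop, |(∫ x in A i, gseq i x ∂μ) - ∫ x in A i, g x ∂μ| < ε/4 := by
      have := Metric.tendsto_nhds.mp hdg (ε/4) (by positivity)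
      simpa [Real.dist_eq] using this
    have E2 : ∀ᶠ i in atTop, (∫ x in A i, f x ∂μ) < ε' * (d/2) :=
      hfA.eventually_lt_const (by positivity)
    filter_upwards [E1, E2] with i h1 h2
    -- Markov bound on the large-f' part
    set S : Set ℝ := A i ∩ {x | ε' ≤ f' x} with hSdef
    have hSm : MeasurableSet S := (hAm i).inter (hf'meas measurableSet_Ici)
    have hmark : ε' * (μ S).toReal ≤ ∫ x in S, f' x ∂μ := by
      have := setIntegral_ge_of_const_le hSm (measure_ne_top μ _) (fun x hx => hx.2)
        hf'Int.integrableOn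
      rw [smul_eq_mul, mul_comm] at this; exact this
    have hSA : (∫ x in S, f' x ∂μ) ≤ ∫ x in A i, f' x ∂μ :=
      setIntegral_mono_set hf'Int.integrableOn (ae_restrict_of_ae hf'nn)
        (HasSubset.Subset.eventuallyLE Set.inter_subset_left)
    have heqf : (∫ x in A i, f' x ∂μ) = ∫ x in A i, f x ∂μ :=
      integral_congr_ae (ae_restrict_of_ae hfae.symm)
    have hμS : μ S < δ := by
      have h3 : ε' * (μ S).toReal < ε' * (d/2) := by
        calc ε' * (μ S).toReal ≤ ∫ x in S, f' x ∂μ := hmark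
          _ ≤ ∫ x in A i, f' x ∂μ := hSA
          _ = ∫ x in A i, f x ∂μ := heqf
          _ < ε' * (d/2) := h2
      have h4 : (μ S).toReal < d/2 := lt_of_mul_lt_mul_left h3 hε'pos.le
      have h5 : (μ S).toReal < δ'.toReal := by rw [← hd]; linarith
      have h6 : μ S < δ' :=
        (ENNReal.toReal_lt_toReal (measure_ne_top μ _) hδ'top).mp h5
      exact h6.trans_le (min_le_left _ _)
    have hb3' : (∫ x in S, g x ∂μ) < ε/4 := habs S hμS
    -- splitting of the integral over A i
    have hsplit1 : (∫ x in A i, g x ∂μ) =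
        (∫ x in A i ∩ Z, g x ∂μ) + ∫ x in A i \ Z, g x ∂μ :=
      (integral_inter_add_diff hZm hgInt.integrableOn).symm
    have hsplit2 : (∫ x in A i \ Z, g x ∂μ) =
        (∫ x in (A i \ Z) ∩ {x | f' x < ε'}, g x ∂μ)
          + ∫ x in (A i \ Z) \ {x | f' x < ε'}, g x ∂μ :=
      (integral_inter_add_diff (hf'meas measurableSet_Iio) hgInt.integrableOn).symm
    have hb1 : (∫ x in A i ∩ Z, g x ∂μ) ≤ c :=
      setIntegral_mono_set hgInt.integrableOn (hgnnres _)
        (HasSubset.Subset.eventuallyLE (Set.inter_subset_inter_left Z (hAO i)))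
    have hb2 : (∫ x in (A i \ Z) ∩ {x | f' x < ε'}, g x ∂μ) < ε/4 := by
      refine lt_of_le_of_lt ?_ hN
      refine setIntegral_mono_set hgInt.integrableOn (hgnnres _)
        (HasSubset.Subset.eventuallyLE ?_)
      intro x hx
      exact ⟨⟨hAO i hx.1.1, hx.1.2⟩, hx.2⟩
    have hb3 : (∫ x in (A i \ Z) \ {x | f' x < ε'}, g x ∂μ) < ε/4 := by
      refine lt_of_le_of_lt ?_ hb3'
      refine setIntegral_mono_set hgInt.integrableOn (hgnnres _)
        (HasSubset.Subset.eventuallyLE ?_)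
      intro x hx
      exact ⟨hx.1.1, show ε' ≤ f' x from not_lt.mp hx.2⟩
    have hgA : (∫ x in A i, g x ∂μ) ≤ c + ε/4 + ε/4 := by
      rw [hsplit1, hsplit2]; linarith
    have habs1 : (∫ x in A i, gseq i x ∂μ) ≤ (∫ x in A i, g x ∂μ) + ε/4 := by
      have := abs_lt.mp h1
      linarith [this.2]
    have hfinal : (∫ x in A i, gseq i x ∂μ) ≤ c + ε := by linarith
    rw [show (∫ x in O \ L i, gseq i x) = ∫ x in A i, gseq i x ∂μ from
      hvol (gseq i) (A i) (hAI i)]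
    exact hfinal
  -- conclude via limsup
  have hls : ∀ ε : ℝ, 0 < ε →
      atTop.limsup (fun i => ∫ x in O \ L i, gseq i x) ≤ c + ε := by
    intro ε hε
    refine limsup_le_of_le ?_ (key ε hε)
    exact isCoboundedUnder_le_of_le atTop
      (fun i => integral_nonneg (fun x => hgnn i x))
  by_contra hcon
  push_neg at hcon
  have := hls ((atTop.limsup (fun i => ∫ x in O \ L i, gseq i x) - c)/2) (by linarith)
  linarith
end

section
/- Let ψ, f : [0,∞) → [0,∞) be locally integrable, L ∈ ℝ, c > 0, ε ∈ (0,1), and let a : [0,∞) → ℝ with a(s) → 0 as s → ∞, such that ∫₀^s f(t)dt = (L + a(s))·∫₀^s ψ(t)dt for all s. Suppose (s_k) → ∞ satisfies ∫_{(1−ε)s_k}^{s_k} ψ(t)dt ≥ c·ε·∫₀^{s_k} ψ(t)dt > 0 for all k. Then (∫_{(1−ε)s_k}^{s_k} f(t)dt) / (∫_{(1−ε)s_k}^{s_k} ψ(t)dt) → L as k → ∞. -/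
open MeasureTheory Filter intervalIntegral

/-- Window ratio convergence: if `∫₀^s f = (L + a(s))·∫₀^s ψ` with `a(s) → 0`, and the
windows `[(1−ε)s_k, s_k]` capture at least a `cε`-fraction of `∫₀^{s_k} ψ > 0`, then
the window ratios `∫_{(1−ε)s_k}^{s_k} f / ∫_{(1−ε)s_k}^{s_k} ψ` converge to `L`. -/
theorem stmt11 (ψ f : ℝ → ℝ) (L c ε : ℝ) (hc : 0 < c) (hε0 : 0 < ε) (hε1 : ε < 1)
    (hψnn : ∀ t, 0 ≤ t → 0 ≤ ψ t) (hfnn : ∀ t, 0 ≤ t → 0 ≤ f t)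
    (hψint : ∀ s : ℝ, IntegrableOn ψ (Set.Icc 0 s))
    (hfint : ∀ s : ℝ, IntegrableOn f (Set.Icc 0 s))
    (aerr : ℝ → ℝ) (ha : Tendsto aerr atTop (nhds 0))
    (hhopf : ∀ s : ℝ, 0 ≤ s →
      (∫ t in (0 : ℝ)..s, f t) = (L + aerr s) * ∫ t in (0 : ℝ)..s, ψ t)
    (s : ℕ → ℝ) (hs : Tendsto s atTop atTop) (hspos : ∀ k, 0 < s k)
    (hwin : ∀ k, c * ε * ∫ t in (0 : ℝ)..s k, ψ t ≤
      ∫ t in ((1 - ε) * s k)..s k, ψ t)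
    (hwinpos : ∀ k, 0 < ∫ t in ((1 - ε) * s k)..s k, ψ t) :
    Tendsto (fun k =>
        (∫ t in ((1 - ε) * s k)..s k, f t) / ∫ t in ((1 - ε) * s k)..s k, ψ t)
      atTop (nhds L) := by
  have hcε : 0 < c * ε := mul_pos hc hε0
  have h1ε : (0:ℝ) < 1 - ε := by linarith
  have hu0 : ∀ k, 0 ≤ (1 - ε) * s k := fun k => mul_nonneg h1ε.le (hspos k).le
  have hus : ∀ k, (1 - ε) * s k ≤ s k := fun k => by nlinarith [hspos k]
  -- interval integrability
  have hii : ∀ (g : ℝ → ℝ), (∀ σ : ℝ, IntegrableOn g (Set.Icc 0 σ)) →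
      ∀ (a b : ℝ), 0 ≤ a → a ≤ b → IntervalIntegrable g volume a b := by
    intro g hg a b ha0 hab
    have hsub : Set.uIcc a b ⊆ Set.Icc 0 b := by
      rw [Set.uIcc_of_le hab]
      exact Set.Icc_subset_Icc ha0 le_rfl
    exact ((hg b).mono_set hsub).intervalIntegrable
  -- the error bound sequence
  set e : ℕ → ℝ := fun k => (|aerr (s k)| + |aerr ((1 - ε) * s k)|) / (c * ε) with he
  have he0 : Tendsto e atTop (nhds 0) := by
    have h1 : Tendsto (fun k => aerr (s k)) atTop (nhds 0) := ha.comp hs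
    have h2 : Tendsto (fun k => aerr ((1 - ε) * s k)) atTop (nhds 0) :=
      ha.comp (hs.const_mul_atTop h1ε)
    have := ((h1.abs.add h2.abs).div_const (c * ε))
    simpa using this
  rw [← tendsto_sub_nhds_zero_iff]
  apply squeeze_zero_norm _ he0
  intro k
  set u := (1 - ε) * s k with hudef
  set S := s k with hSdef
  have hP : (∫ t in (0:ℝ)..S, f t) = (∫ t in (0:ℝ)..u, f t) + ∫ t in u..S, f t :=
    (integral_add_adjacent_intervals (hii f hfint 0 u le_rfl (hu0 k))
      (hii f hfint u S (hu0 k) (hus k))).symm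
  have hQ : (∫ t in (0:ℝ)..S, ψ t) = (∫ t in (0:ℝ)..u, ψ t) + ∫ t in u..S, ψ t :=
    (integral_add_adjacent_intervals (hii ψ hψint 0 u le_rfl (hu0 k))
      (hii ψ hψint u S (hu0 k) (hus k))).symm
  set P := ∫ t in (0:ℝ)..S, ψ t with hPdef
  set Q := ∫ t in (0:ℝ)..u, ψ t with hQdef
  set W := ∫ t in u..S, ψ t with hWdef
  set F := ∫ t in u..S, f t with hFdef
  have hWpos : 0 < W := hwinpos k
  have hQnn : 0 ≤ Q := intervalIntegral.integral_nonneg (hu0 k)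
    (fun t ht => hψnn t ht.1)
  have hPQ : P = Q + W := hQ
  have hPpos : 0 < P := by rw [hPQ]; linarith
  have hcεP : c * ε * P ≤ W := hwin k
  set A := aerr S with hAdef
  set B := aerr u with hBdef
  have hF : F = A * P - B * Q + L * W := by
    have h1 := hhopf S (hspos k).le
    have h2 := hhopf u (hu0 k)
    have : (∫ t in (0:ℝ)..u, f t) + F = (L + A) * P := by rw [← hP]; exact h1
    have h2' : (∫ t in (0:ℝ)..u, f t) = (L + B) * Q := h2
    rw [h2'] at this
    linear_combination this + L * hPQ
  -- bound
  have hkey : |F / W - L| ≤ e k := by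
    have hW0 : W ≠ 0 := ne_of_gt hWpos
    have : F / W - L = (A * P - B * Q) / W := by
      field_simp [hF]; linear_combination hF
    rw [this, abs_div, abs_of_pos hWpos]
    rw [div_le_div_iff₀ hWpos hcε]
    have habs : |A * P - B * Q| ≤ (|A| + |B|) * P := by
      calc |A * P - B * Q| ≤ |A * P| + |B * Q| := abs_sub _ _
        _ = |A| * P + |B| * Q := by
            rw [abs_mul, abs_mul, abs_of_pos hPpos, abs_of_nonneg hQnn]
        _ ≤ |A| * P + |B| * P := by
            have : Q ≤ P := by linarith
            nlinarith [abs_nonneg B]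
        _ = (|A| + |B|) * P := by ring
    calc |A * P - B * Q| * (c * ε) ≤ (|A| + |B|) * P * (c * ε) := by
          nlinarith [abs_nonneg (A * P - B * Q)]
      _ = (|A| + |B|) * (c * ε * P) := by ring
      _ ≤ (|A| + |B|) * W := by
          nlinarith [abs_nonneg A, abs_nonneg B]
  simpa using hkey
end
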